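/- Let f : ℝ → ℝ be a C² function and c₃, m₀ nonzero constants such that (m₀/(2c₃) + f)·f'' − 2(f')² = 0 on an interval, with f nonconstant. Then there exist constants c₄ ≠ 0 and d₉ such that f(x) = −(1/(c₄x + d₉) + m₀/(2c₃)) on that interval. -/

import Mathlib

open Set
section
variable {α β : ℝ} {u : ℝ → ℝ}

lemma myconst {g : ℝ → ℝ} (hg : ∀ x ∈ Ioo α β, HasDerivAt g 0 x)
    {x y : ℝ} (hx : x ∈ Ioo α β) (hy : y ∈ Ioo α β) : g x = g y := by
  wlog hxy : x ≤ y generalizing x y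
  · exact (this hy hx (le_of_not_ge hxy)).symm
  have hsub : Icc x y ⊆ Ioo α β := fun z hz => ⟨lt_of_lt_of_le hx.1 hz.1, lt_of_le_of_lt hz.2 hy.2⟩
  have := constant_of_has_deriv_right_zero (f := g) (a := x) (b := y)
    (fun z hz => ((hg z (hsub hz)).continuousAt).continuousWithinAt)
    (fun z hz => ((hg z (hsub (Ico_subset_Icc_self hz))).hasDerivWithinAt))
  exact (this y (right_mem_Icc.2 hxy)).symm

lemma myaffine (hab : α < β) (hu : ContDiff ℝ 2 u)
    (hode : ∀ x ∈ Ioo α β, u x * deriv (deriv u) x - 2 * (deriv u x) ^ 2 = 0)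
    (hne : ∀ x ∈ Ioo α β, u x ≠ 0) :
    ∃ c d : ℝ, ∀ x ∈ Ioo α β, (u x)⁻¹ = c * x + d := by
  have hud : Differentiable ℝ u := hu.differentiable (by norm_num)
  have hud' : Differentiable ℝ (deriv u) := (hu.iterate_deriv' 1 1).differentiable (by norm_num)
  set w : ℝ → ℝ := fun x => deriv u x / (u x) ^ 2 with hw
  have hwderiv : ∀ x ∈ Ioo α β, HasDerivAt w 0 x := by
    intro x hx
    have h1 : HasDerivAt (deriv u) (deriv (deriv u) x) x := (hud' x).hasDerivAt
    have h2 : HasDerivAt (fun y => u y ^ 2) (2 * u x ^ 1 * deriv u x) x :=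
      (hud x).hasDerivAt.pow 2
    have h3 := h1.div h2 (pow_ne_zero 2 (hne x hx))
    have h0 := hode x hx
    refine h3.congr_deriv (Eq.symm ?_)
    rw [eq_comm, div_eq_zero_iff]
    left
    linear_combination u x * h0
  set x₀ : ℝ := (α + β) / 2 with hx₀
  have hx₀m : x₀ ∈ Ioo α β := ⟨by linarith, by linarith⟩
  set c : ℝ := w x₀ with hc
  have hwc : ∀ x ∈ Ioo α β, w x = c := fun x hx => myconst hwderiv hx hx₀m
  set G : ℝ → ℝ := fun x => (u x)⁻¹ + c * x with hG
  have hGderiv : ∀ x ∈ Ioo α β, HasDerivAt G 0 x := by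
    intro x hx
    have h1 : HasDerivAt (fun y => (u y)⁻¹) (-deriv u x / u x ^ 2) x :=
      (hud x).hasDerivAt.inv (hne x hx)
    have h2 : HasDerivAt (fun y => c * y) c x := by
      simpa using (hasDerivAt_id x).const_mul c
    have h3 := h1.add h2
    refine h3.congr_deriv (Eq.symm ?_)
    have := hwc x hx
    simp only [hw] at this
    rw [neg_div]
    linarith
  refine ⟨-c, G x₀, fun x hx => ?_⟩
  have := myconst hGderiv hx hx₀m
  simp only [hG] at this
  linarith

/-- if u vanishes at x₁ ∈ (α,β) and x₁ < x₂ ∈ (α,β) with u x₂ ≠ 0 : contradiction -/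
lemma myaux (hu : ContDiff ℝ 2 u)
    (hode : ∀ x ∈ Ioo α β, u x * deriv (deriv u) x - 2 * (deriv u x) ^ 2 = 0)
    {x₁ x₂ : ℝ} (h1 : x₁ ∈ Ioo α β) (h2 : x₂ ∈ Ioo α β) (h12 : x₁ < x₂)
    (hu1 : u x₁ = 0) (hu2 : u x₂ ≠ 0) : False := by
  set S : Set ℝ := {x ∈ Icc x₁ x₂ | u x = 0} with hS
  have hSne : S.Nonempty := ⟨x₁, ⟨le_refl _, h12.le⟩, hu1⟩
  have hScomp : IsCompact S :=
    (isCompact_Icc.inter_right (isClosed_eq (hu.continuous) continuous_const))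
  have hSbdd : BddAbove S := hScomp.bddAbove
  set p : ℝ := sSup S with hp
  have hpS : p ∈ S := hScomp.sSup_mem hSne
  have hpIcc : p ∈ Icc x₁ x₂ := hpS.1
  have hup : u p = 0 := hpS.2
  have hpx₂ : p < x₂ := lt_of_le_of_ne hpIcc.2 (fun h => hu2 (h ▸ hup))
  have hpα : α < p := lt_of_lt_of_le h1.1 hpIcc.1
  have hsub : Ioo p x₂ ⊆ Ioo α β := fun z hz => ⟨hpα.trans hz.1, hz.2.trans h2.2⟩
  have hne : ∀ x ∈ Ioo p x₂, u x ≠ 0 := by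
    intro x hx hx0
    have : x ∈ S := ⟨⟨hpIcc.1.trans hx.1.le, hx.2.le⟩, hx0⟩
    exact absurd (le_csSup hSbdd this) (not_le.2 hx.1)
  obtain ⟨c, d, hcd⟩ := myaffine hpx₂ hu (fun x hx => hode x (hsub hx)) hne
  -- u x * (c x + d) = 1 on (p, x₂), but limit at p⁺ is u p * (c p + d) = 0
  have key : ∀ x ∈ Ioo p x₂, u x * (c * x + d) = 1 := by
    intro x hx
    rw [← hcd x hx, mul_inv_cancel₀ (hne x hx)]
  have ht1 : Filter.Tendsto (fun x => u x * (c * x + d)) (nhdsWithin p (Ioi p))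
      (nhds (u p * (c * p + d))) :=
    ((hu.continuous.continuousAt.mul (by fun_prop)).continuousWithinAt)
  have hev : (fun x => u x * (c * x + d)) =ᶠ[nhdsWithin p (Ioi p)] (fun _ => (1:ℝ)) := by
    filter_upwards [Ioo_mem_nhdsGT hpx₂] with x hx
    exact key x hx
  have ht2 : Filter.Tendsto (fun x => u x * (c * x + d)) (nhdsWithin p (Ioi p)) (nhds 1) := by
    rw [Filter.tendsto_congr' hev]
    exact tendsto_const_nhds
  have : u p * (c * p + d) = 1 := tendsto_nhds_unique ht1 ht2
  rw [hup, zero_mul] at this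
  exact zero_ne_one this

/-- u cannot vanish at one point and be nonzero at another -/
lemma mynonvanish (hab : α < β) (hu : ContDiff ℝ 2 u)
    (hode : ∀ x ∈ Ioo α β, u x * deriv (deriv u) x - 2 * (deriv u x) ^ 2 = 0)
    {x₁ x₂ : ℝ} (h1 : x₁ ∈ Ioo α β) (h2 : x₂ ∈ Ioo α β)
    (hu1 : u x₁ = 0) (hu2 : u x₂ ≠ 0) : False := by
  rcases lt_trichotomy x₁ x₂ with h | h | h
  · exact myaux hu hode h1 h2 h hu1 hu2
  · exact hu2 (h ▸ hu1)
  · -- reflect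
    set v : ℝ → ℝ := fun x => u (-x) with hv
    have hud : Differentiable ℝ u := hu.differentiable (by norm_num)
    have hud' : Differentiable ℝ (deriv u) := (hu.iterate_deriv' 1 1).differentiable (by norm_num)
    have hvc : ContDiff ℝ 2 v := hu.comp contDiff_neg
    have hD1 : ∀ x, HasDerivAt v (-(deriv u (-x))) x := by
      intro x
      have := ((hud (-x)).hasDerivAt).comp x (hasDerivAt_neg x)
      exact this.congr_deriv (by ring)
    have hd1 : deriv v = fun x => -(deriv u (-x)) := funext fun x => (hD1 x).deriv
    have hd2 : ∀ x, deriv (deriv v) x = deriv (deriv u) (-x) := by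
      intro x
      rw [hd1]
      have := (((hud' (-x)).hasDerivAt).comp x (hasDerivAt_neg x)).neg
      simpa [Function.comp_def] using this.deriv
    have hodev : ∀ x ∈ Ioo (-β) (-α), v x * deriv (deriv v) x - 2 * (deriv v x) ^ 2 = 0 := by
      intro x hx
      have hxm : -x ∈ Ioo α β := ⟨by linarith [hx.2], by linarith [hx.1]⟩
      have := hode (-x) hxm
      rw [hd2, hd1]
      simp only [hv]
      nlinarith [this]
    exact myaux hvc hodev (x₁ := -x₁) (x₂ := -x₂)
      ⟨by linarith [h1.2], by linarith [h1.1]⟩ ⟨by linarith [h2.2], by linarith [h2.1]⟩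
      (by linarith) (show v (-x₁) = 0 by simp only [hv, neg_neg]; exact hu1) (show v (-x₂) ≠ 0 by simp only [hv, neg_neg]; exact hu2)

end

theorem stmt10 (a b c₃ m₀ : ℝ) (hab : a < b) (hc₃ : c₃ ≠ 0) (hm₀ : m₀ ≠ 0)
    (f : ℝ → ℝ) (hf : ContDiff ℝ 2 f)
    (hode : ∀ x ∈ Set.Ioo a b,
      (m₀ / (2 * c₃) + f x) * deriv (deriv f) x - 2 * (deriv f x) ^ 2 = 0)
    (hnc : ¬ ∃ k : ℝ, ∀ x ∈ Set.Ioo a b, f x = k) :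
    ∃ c₄ : ℝ, c₄ ≠ 0 ∧ ∃ d₉ : ℝ, ∀ x ∈ Set.Ioo a b,
      f x = -(1 / (c₄ * x + d₉) + m₀ / (2 * c₃)) := by
  set u : ℝ → ℝ := fun x => m₀ / (2 * c₃) + f x with hu_def
  have hu : ContDiff ℝ 2 u := contDiff_const.add hf
  have hdu : deriv u = deriv f := funext fun x => deriv_const_add _
  have hode' : ∀ x ∈ Ioo a b, u x * deriv (deriv u) x - 2 * (deriv u x) ^ 2 = 0 := by
    intro x hx
    rw [hdu]
    exact hode x hx
  have hne : ∀ x ∈ Ioo a b, u x ≠ 0 := by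
    intro x hx hx0
    by_cases hall : ∀ y ∈ Ioo a b, u y = 0
    · refine hnc ⟨-(m₀ / (2 * c₃)), fun y hy => ?_⟩
      have := hall y hy
      simp only [hu_def] at this
      linarith
    · push_neg at hall
      obtain ⟨x₂, hx₂, hu2⟩ := hall
      exact mynonvanish hab hu hode' hx hx₂ hx0 hu2
  obtain ⟨c, d, hcd⟩ := myaffine hab hu hode' hne
  have hc0 : c ≠ 0 := by
    intro h0
    refine hnc ⟨d⁻¹ - m₀ / (2 * c₃), fun x hx => ?_⟩
    have h := hcd x hx
    rw [h0, zero_mul, zero_add] at h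
    have : u x = d⁻¹ := by rw [← h, inv_inv]
    simp only [hu_def] at this
    linarith
  refine ⟨-c, neg_ne_zero.2 hc0, -d, fun x hx => ?_⟩
  have h := hcd x hx
  have hux := hne x hx
  have hcdx : c * x + d ≠ 0 := h ▸ inv_ne_zero hux
  have hux2 : u x = (c * x + d)⁻¹ := by rw [← h, inv_inv]
  have hfu : f x = u x - m₀ / (2 * c₃) := by simp only [hu_def]; ring
  rw [hfu, hux2]
  have hneg : -c * x + -d = -(c * x + d) := by ring
  rw [hneg]
  rw [one_div, inv_neg]
  ring
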